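/- arXiv:1009.4285 — 2 statements merged into one kernel-verified Lean document; each statement's English description precedes it below -/
import Mathlib

section
/- The algebra D_{n,q} is isomorphic as a ℂ(q)-algebra to the direct sum ⊕_{c ∈ Comp_n} H_{c,q} of Young subalgebras of Iwahori-Hecke algebras, via the map ψ whose c-component sends S_i to S_i if i lies in the code of c and to 0 otherwise, and I_i to 1 if i lies in the code of c and to 0 otherwise. -/
open FreeAlgebra

/-- The defining relations of the Hecke algebra `D_{n,q}` of composed permutations, with
`m = n - 1` generators `S i` (encoded `Sum.inl i`) and `I i` (encoded `Sum.inr i`). -/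
inductive DRel (F : Type*) [CommRing F] (q : F) (m : ℕ) :
    FreeAlgebra F (Fin m ⊕ Fin m) → FreeAlgebra F (Fin m ⊕ Fin m) → Prop
  | braid (i j : Fin m) (h : (j : ℕ) = (i : ℕ) + 1) :
      DRel F q m (ι F (.inl i) * ι F (.inl j) * ι F (.inl i))
        (ι F (.inl j) * ι F (.inl i) * ι F (.inl j))
  | comm (i j : Fin m) (h : (i : ℕ) + 1 < (j : ℕ) ∨ (j : ℕ) + 1 < (i : ℕ)) :
      DRel F q m (ι F (.inl i) * ι F (.inl j)) (ι F (.inl j) * ι F (.inl i))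
  | quad (i : Fin m) :
      DRel F q m (ι F (.inl i) * ι F (.inl i))
        ((q - 1) • ι F (.inl i) + q • ι F (.inr i))
  | scomm (i j : Fin m) :
      DRel F q m (ι F (.inl i) * ι F (.inr j)) (ι F (.inr j) * ι F (.inl i))
  | icomm (i j : Fin m) :
      DRel F q m (ι F (.inr i) * ι F (.inr j)) (ι F (.inr j) * ι F (.inr i))
  | absorb (i : Fin m) :
      DRel F q m (ι F (.inl i) * ι F (.inr i)) (ι F (.inl i))
  | idem (i : Fin m) :
      DRel F q m (ι F (.inr i) * ι F (.inr i)) (ι F (.inr i))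

/-- The Hecke algebra `D_{n,q}` of composed permutations, presented by generators and
relations; here `m = n - 1`. -/
abbrev DAlg (F : Type*) [CommRing F] (q : F) (m : ℕ) := RingQuot (DRel F q m)

/-- The defining relations of the Young (parabolic) subalgebra `H_{c,q}` of the
Iwahori–Hecke algebra `H_{n,q}`, for the composition `c` of `n` with code `E`
(the complement of the descent set of `c` in `{1,…,n-1}`, encoded as a subset of
`Fin m`, `m = n - 1`): generators `S i` for `i ∈ E`, with braid, commutation and
quadratic relations. -/
inductive HRel (F : Type*) [CommRing F] (q : F) (m : ℕ) (E : Finset (Fin m)) :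
    FreeAlgebra F {i : Fin m // i ∈ E} → FreeAlgebra F {i : Fin m // i ∈ E} → Prop
  | braid (i j : {i : Fin m // i ∈ E}) (h : ((j : Fin m) : ℕ) = ((i : Fin m) : ℕ) + 1) :
      HRel F q m E (ι F i * ι F j * ι F i) (ι F j * ι F i * ι F j)
  | comm (i j : {i : Fin m // i ∈ E})
      (h : ((i : Fin m) : ℕ) + 1 < ((j : Fin m) : ℕ) ∨
           ((j : Fin m) : ℕ) + 1 < ((i : Fin m) : ℕ)) :
      HRel F q m E (ι F i * ι F j) (ι F j * ι F i)
  | quad (i : {i : Fin m // i ∈ E}) :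
      HRel F q m E (ι F i * ι F i) ((q - 1) • ι F i + q • 1)

/-- The Young subalgebra `H_{c,q}` of `H_{n,q}` for the composition with code `E`. -/
abbrev HAlg (F : Type*) [CommRing F] (q : F) (m : ℕ) (E : Finset (Fin m)) :=
  RingQuot (HRel F q m E)


namespace DYoung

variable (F : Type*) [CommRing F] (q : F) (m : ℕ)

/-- The generator `S i` of `D`. -/
noncomputable def SD (i : Fin m) : DAlg F q m :=
  RingQuot.mkAlgHom F (DRel F q m) (ι F (.inl i))

/-- The generator `I i` of `D`. -/
noncomputable def ID (i : Fin m) : DAlg F q m :=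
  RingQuot.mkAlgHom F (DRel F q m) (ι F (.inr i))

/-- The generator `S i` of `H_E`. -/
noncomputable def SH (E : Finset (Fin m)) (x : {i : Fin m // i ∈ E}) : HAlg F q m E :=
  RingQuot.mkAlgHom F (HRel F q m E) (ι F x)

lemma braidD (i j : Fin m) (h : (j : ℕ) = (i : ℕ) + 1) :
    SD F q m i * SD F q m j * SD F q m i = SD F q m j * SD F q m i * SD F q m j := by
  simpa [SD, map_mul] using RingQuot.mkAlgHom_rel F (DRel.braid (F := F) (q := q) i j h)

lemma commD (i j : Fin m) (h : (i : ℕ) + 1 < (j : ℕ) ∨ (j : ℕ) + 1 < (i : ℕ)) :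
    SD F q m i * SD F q m j = SD F q m j * SD F q m i := by
  simpa [SD, map_mul] using RingQuot.mkAlgHom_rel F (DRel.comm (F := F) (q := q) i j h)

lemma quadD (i : Fin m) :
    SD F q m i * SD F q m i = (q - 1) • SD F q m i + q • ID F q m i := by
  simpa [SD, ID, map_mul, map_add, map_smul] using
    RingQuot.mkAlgHom_rel F (DRel.quad (F := F) (q := q) i)

lemma scommD (i j : Fin m) :
    SD F q m i * ID F q m j = ID F q m j * SD F q m i := by
  simpa [SD, ID, map_mul] using RingQuot.mkAlgHom_rel F (DRel.scomm (F := F) (q := q) i j)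

lemma icommD (i j : Fin m) :
    ID F q m i * ID F q m j = ID F q m j * ID F q m i := by
  simpa [SD, ID, map_mul] using RingQuot.mkAlgHom_rel F (DRel.icomm (F := F) (q := q) i j)

lemma absorbD (i : Fin m) : SD F q m i * ID F q m i = SD F q m i := by
  simpa [SD, ID, map_mul] using RingQuot.mkAlgHom_rel F (DRel.absorb (F := F) (q := q) i)

lemma idemD (i : Fin m) : ID F q m i * ID F q m i = ID F q m i := by
  simpa [SD, ID, map_mul] using RingQuot.mkAlgHom_rel F (DRel.idem (F := F) (q := q) i)

lemma braidH (E : Finset (Fin m)) (x y : {i : Fin m // i ∈ E})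
    (h : ((y : Fin m) : ℕ) = ((x : Fin m) : ℕ) + 1) :
    SH F q m E x * SH F q m E y * SH F q m E x
      = SH F q m E y * SH F q m E x * SH F q m E y := by
  simpa [SH, map_mul] using RingQuot.mkAlgHom_rel F (HRel.braid (F := F) (q := q) x y h)

lemma commH (E : Finset (Fin m)) (x y : {i : Fin m // i ∈ E})
    (h : ((x : Fin m) : ℕ) + 1 < ((y : Fin m) : ℕ) ∨
         ((y : Fin m) : ℕ) + 1 < ((x : Fin m) : ℕ)) :
    SH F q m E x * SH F q m E y = SH F q m E y * SH F q m E x := by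
  simpa [SH, map_mul] using RingQuot.mkAlgHom_rel F (HRel.comm (F := F) (q := q) x y h)

lemma quadH (E : Finset (Fin m)) (x : {i : Fin m // i ∈ E}) :
    SH F q m E x * SH F q m E x = (q - 1) • SH F q m E x + q • 1 := by
  simpa [SH, map_mul, map_add, map_smul] using
    RingQuot.mkAlgHom_rel F (HRel.quad (F := F) (q := q) x)

end DYoung
namespace DYoung

variable (F : Type*) [CommRing F] (q : F) (m : ℕ)

/-- Generators for the projection to `H_E`. -/
noncomputable def piGen (E : Finset (Fin m)) : Fin m ⊕ Fin m → HAlg F q m E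
  | .inl i => if h : i ∈ E then SH F q m E ⟨i, h⟩ else 0
  | .inr i => if i ∈ E then 1 else 0

noncomputable def piFree (E : Finset (Fin m)) :
    FreeAlgebra F (Fin m ⊕ Fin m) →ₐ[F] HAlg F q m E :=
  FreeAlgebra.lift F (piGen F q m E)

lemma piFree_rel (E : Finset (Fin m)) :
    ∀ ⦃x y⦄, DRel F q m x y → piFree F q m E x = piFree F q m E y := by
  intro x y r
  induction r with
  | braid i j h =>
      simp only [piFree, map_mul, FreeAlgebra.lift_ι_apply, piGen]
      by_cases hi : i ∈ E <;> by_cases hj : j ∈ E <;> simp [hi, hj]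
      exact braidH F q m E ⟨i, hi⟩ ⟨j, hj⟩ h
  | comm i j h =>
      simp only [piFree, map_mul, FreeAlgebra.lift_ι_apply, piGen]
      by_cases hi : i ∈ E <;> by_cases hj : j ∈ E <;> simp [hi, hj]
      exact commH F q m E ⟨i, hi⟩ ⟨j, hj⟩ h
  | quad i =>
      simp only [piFree, map_mul, map_add, map_smul, FreeAlgebra.lift_ι_apply, piGen]
      by_cases hi : i ∈ E <;> simp [hi]
      exact quadH F q m E ⟨i, hi⟩
  | scomm i j =>
      simp only [piFree, map_mul, FreeAlgebra.lift_ι_apply, piGen]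
      by_cases hi : i ∈ E <;> by_cases hj : j ∈ E <;> simp [hi, hj]
  | icomm i j =>
      simp only [piFree, map_mul, FreeAlgebra.lift_ι_apply, piGen]
      by_cases hi : i ∈ E <;> by_cases hj : j ∈ E <;> simp [hi, hj]
  | absorb i =>
      simp only [piFree, map_mul, FreeAlgebra.lift_ι_apply, piGen]
      by_cases hi : i ∈ E <;> simp [hi]
  | idem i =>
      simp only [piFree, map_mul, FreeAlgebra.lift_ι_apply, piGen]
      by_cases hi : i ∈ E <;> simp [hi]

/-- The projection `D → H_E`. -/
noncomputable def piHom (E : Finset (Fin m)) : DAlg F q m →ₐ[F] HAlg F q m E :=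
  RingQuot.liftAlgHom F ⟨piFree F q m E, piFree_rel F q m E⟩

lemma piHom_S (E : Finset (Fin m)) (i : Fin m) :
    piHom F q m E (SD F q m i) = if h : i ∈ E then SH F q m E ⟨i, h⟩ else 0 := by
  simp [piHom, SD, RingQuot.liftAlgHom_mkAlgHom_apply, piFree, FreeAlgebra.lift_ι_apply, piGen]

lemma piHom_I (E : Finset (Fin m)) (i : Fin m) :
    piHom F q m E (ID F q m i) = if i ∈ E then 1 else 0 := by
  simp [piHom, ID, RingQuot.liftAlgHom_mkAlgHom_apply, piFree, FreeAlgebra.lift_ι_apply, piGen]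

end DYoung
namespace DYoung

variable (F : Type*) [CommRing F] (q : F) (m : ℕ)

lemma ID_mem_center (i : Fin m) :
    ID F q m i ∈ Subalgebra.center F (DAlg F q m) := by
  rw [Subalgebra.mem_center_iff]
  intro b
  obtain ⟨a, rfl⟩ := RingQuot.mkAlgHom_surjective F (DRel F q m) b
  induction a using FreeAlgebra.induction with
  | grade0 r =>
      have hr : (RingQuot.mkAlgHom F (DRel F q m)) (algebraMap F (FreeAlgebra F (Fin m ⊕ Fin m)) r)
          = algebraMap F (DAlg F q m) r := AlgHom.commutes _ r
      rw [hr]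
      exact Algebra.commutes (A := DAlg F q m) r (ID F q m i)
  | grade1 x =>
      cases x with
      | inl j => exact scommD F q m j i
      | inr j => exact icommD F q m j i
  | mul a b ha hb =>
      rw [map_mul, mul_assoc, hb, ← mul_assoc, ha, mul_assoc]
  | add a b ha hb =>
      rw [map_add, add_mul, mul_add, ha, hb]

/-- `I i` as an element of the center. -/
noncomputable def IC (i : Fin m) : Subalgebra.center F (DAlg F q m) :=
  ⟨ID F q m i, ID_mem_center F q m i⟩

/-- The idempotent `e_E` as an element of the center. -/
noncomputable def eC (E : Finset (Fin m)) : Subalgebra.center F (DAlg F q m) :=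
  ∏ i, if i ∈ E then IC F q m i else 1 - IC F q m i

/-- The idempotent `e_E` in `D`. -/
noncomputable def eD (E : Finset (Fin m)) : DAlg F q m := (eC F q m E : DAlg F q m)

lemma eD_comm (E : Finset (Fin m)) (x : DAlg F q m) :
    x * eD F q m E = eD F q m E * x :=
  Subalgebra.mem_center_iff.mp (eC F q m E).2 x

lemma factor_sq (E : Finset (Fin m)) (i : Fin m) :
    (if i ∈ E then IC F q m i else 1 - IC F q m i) *
      (if i ∈ E then IC F q m i else 1 - IC F q m i)
      = (if i ∈ E then IC F q m i else 1 - IC F q m i) := by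
  have h : ID F q m i * ID F q m i = ID F q m i := idemD F q m i
  split_ifs with hi
  · exact Subtype.ext h
  · apply Subtype.ext
    push_cast [IC]
    show (1 - ID F q m i) * (1 - ID F q m i) = 1 - ID F q m i
    rw [sub_mul, one_mul, mul_sub, mul_one, h, sub_self, sub_zero]

lemma eD_sq (E : Finset (Fin m)) : eD F q m E * eD F q m E = eD F q m E := by
  have : eC F q m E * eC F q m E = eC F q m E := by
    rw [eC, ← Finset.prod_mul_distrib]
    exact Finset.prod_congr rfl fun i _ => factor_sq F q m E i
  rw [eD, ← Subalgebra.coe_mul, this]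

lemma sum_eD : ∑ E : Finset (Fin m), eD F q m E = 1 := by
  have h : ∑ E : Finset (Fin m), eC F q m E = 1 := by
    have h1 : (1 : Subalgebra.center F (DAlg F q m))
        = ∏ i : Fin m, (IC F q m i + (1 - IC F q m i)) := by
      have hone : ∀ i : Fin m, IC F q m i + (1 - IC F q m i) = 1 := fun i => by apply Subtype.ext; simp
      simp [hone]
    rw [Finset.prod_add, Finset.powerset_univ] at h1
    rw [h1]
    refine Finset.sum_congr rfl fun t _ => ?_
    rw [eC, Finset.prod_ite]
    congr 1
    · apply Finset.prod_congr _ fun _ _ => rfl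
      ext j
      simp only [Finset.mem_filter, Finset.mem_univ, true_and]
    · apply Finset.prod_congr _ fun _ _ => rfl
      ext j
      simp only [Finset.mem_filter, Finset.mem_univ, true_and, Finset.mem_sdiff]
  calc ∑ E : Finset (Fin m), eD F q m E
      = ((∑ E : Finset (Fin m), eC F q m E : Subalgebra.center F (DAlg F q m)) : DAlg F q m) := by
        push_cast; rfl
    _ = 1 := by rw [h]; rfl

lemma eD_factor (E : Finset (Fin m)) (i : Fin m) :
    eD F q m E = (if i ∈ E then ID F q m i else 1 - ID F q m i) *
      ((∏ j ∈ Finset.univ.erase i,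
        (if j ∈ E then IC F q m j else 1 - IC F q m j) :
          Subalgebra.center F (DAlg F q m)) : DAlg F q m) := by
  have h := Finset.mul_prod_erase Finset.univ
    (fun j => if j ∈ E then IC F q m j else 1 - IC F q m j) (Finset.mem_univ i)
  rw [eD, eC, ← h]
  push_cast
  split_ifs <;> push_cast <;> rfl

lemma ID_mul_eD (E : Finset (Fin m)) (i : Fin m) (hi : i ∈ E) :
    ID F q m i * eD F q m E = eD F q m E := by
  rw [eD_factor F q m E i, if_pos hi, ← mul_assoc, idemD]

lemma ID_mul_eD_zero (E : Finset (Fin m)) (i : Fin m) (hi : i ∉ E) :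
    ID F q m i * eD F q m E = 0 := by
  rw [eD_factor F q m E i, if_neg hi, ← mul_assoc, mul_sub, mul_one, idemD, sub_self, zero_mul]

lemma SD_mul_eD_zero (E : Finset (Fin m)) (i : Fin m) (hi : i ∉ E) :
    SD F q m i * eD F q m E = 0 := by
  rw [eD_factor F q m E i, if_neg hi, ← mul_assoc, mul_sub, mul_one, absorbD, sub_self, zero_mul]

end DYoung
namespace DYoung

variable (F : Type*) [CommRing F] (q : F) (m : ℕ)

lemma eD_list (E : Finset (Fin m)) :
    eD F q m E = ((List.finRange m).map
      (fun i => if i ∈ E then ID F q m i else 1 - ID F q m i)).prod := by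
  have h := map_list_prod ((Subalgebra.center F (DAlg F q m)).val)
    ((List.finRange m).map (fun i => if i ∈ E then IC F q m i else 1 - IC F q m i))
  rw [eD, eC, Fin.prod_univ_def]
  refine h.trans ?_
  rw [List.map_map]
  refine congrArg List.prod (List.map_congr_left fun i _ => ?_)
  show ((if i ∈ E then IC F q m i else 1 - IC F q m i :
      Subalgebra.center F (DAlg F q m)) : DAlg F q m) = _
  split_ifs <;> push_cast <;> rfl

lemma piHom_eD (E T : Finset (Fin m)) :
    piHom F q m T (eD F q m E) = if E = T then 1 else 0 := by
  rw [eD_list, map_list_prod, List.map_map]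
  have hfac : ∀ i : Fin m,
      (piHom F q m T ∘ fun i => if i ∈ E then ID F q m i else 1 - ID F q m i) i
        = if i ∈ E then (if i ∈ T then 1 else 0) else 1 - (if i ∈ T then 1 else 0) := by
    intro i
    simp only [Function.comp_apply, apply_ite (piHom F q m T), map_sub, map_one, piHom_I]
  by_cases hET : E = T
  · subst hET
    rw [if_pos rfl]
    apply List.prod_eq_one
    intro x hx
    obtain ⟨i, -, rfl⟩ := List.mem_map.mp hx
    rw [hfac i]
    by_cases hi : i ∈ E <;> simp [hi]
  · rw [if_neg hET]
    obtain ⟨i, hi⟩ : ∃ i, ¬(i ∈ E ↔ i ∈ T) := by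
      by_contra hall
      push_neg at hall
      exact hET (Finset.ext fun i => hall i)
    apply List.prod_eq_zero
    rw [List.mem_map]
    refine ⟨i, List.mem_finRange i, ?_⟩
    rw [hfac i]
    rcases Classical.em (i ∈ E) with hiE | hiE <;> rcases Classical.em (i ∈ T) with hiT | hiT <;>
      simp [hiE, hiT] at hi ⊢

/-- The augmentation `H_E → F`, `S ↦ q`. -/
noncomputable def εH (E : Finset (Fin m)) : HAlg F q m E →ₐ[F] F :=
  RingQuot.liftAlgHom F ⟨FreeAlgebra.lift F (fun _ => q), by
    intro x y r
    induction r with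
    | braid i j h => simp
    | comm i j h => simp [mul_comm]
    | quad i =>
        simp only [map_mul, map_add, map_smul, map_one, FreeAlgebra.lift_ι_apply,
          smul_eq_mul]
        ring⟩

lemma εH_S (E : Finset (Fin m)) (x : {i : Fin m // i ∈ E}) :
    εH F q m E (SH F q m E x) = q := by
  simp [εH, SH, RingQuot.liftAlgHom_mkAlgHom_apply, FreeAlgebra.lift_ι_apply]

lemma uu_mul (E : Finset (Fin m)) (a b : F) (x y : DAlg F q m) :
    (x * eD F q m E + a • (1 - eD F q m E)) * (y * eD F q m E + b • (1 - eD F q m E))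
      = (x * y) * eD F q m E + (a * b) • (1 - eD F q m E) := by
  set e := eD F q m E with he
  have hsq : e * e = e := eD_sq F q m E
  have hc : ∀ z : DAlg F q m, z * e = e * z := eD_comm F q m E
  have h1 : ∀ z w : DAlg F q m, z * e * (w * e) = (z * w) * e := by
    intro z w
    rw [mul_assoc, ← mul_assoc e w, ← hc w, mul_assoc w, hsq, ← mul_assoc]
  have h2 : e * (1 - e) = 0 := by rw [mul_sub, mul_one, hsq, sub_self]
  have h3 : ∀ z : DAlg F q m, z * e * (1 - e) = 0 := by
    intro z; rw [mul_assoc, h2, mul_zero]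
  have h4 : ∀ z : DAlg F q m, (1 - e) * (z * e) = 0 := by
    intro z
    rw [sub_mul, one_mul, ← hc (z * e), mul_assoc, hsq, sub_self]
  have h5 : (1 - e) * (1 - e) = 1 - e := by
    rw [sub_mul, one_mul, h2, sub_zero]
  rw [mul_add, add_mul, add_mul, h1, mul_smul_comm, h3, smul_zero, smul_mul_assoc, h4,
    smul_zero, smul_mul_assoc, mul_smul_comm, h5, smul_smul, add_zero, zero_add]

/-- The section `H_E → D`, `S_i ↦ S_i e_E + q (1 - e_E)`. -/
noncomputable def σfree (E : Finset (Fin m)) :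
    FreeAlgebra F {i : Fin m // i ∈ E} →ₐ[F] DAlg F q m :=
  FreeAlgebra.lift F fun x => SD F q m x.1 * eD F q m E + q • (1 - eD F q m E)

lemma σfree_rel (E : Finset (Fin m)) :
    ∀ ⦃x y⦄, HRel F q m E x y → σfree F q m E x = σfree F q m E y := by
  intro x y r
  induction r with
  | braid i j h =>
      simp only [σfree, map_mul, FreeAlgebra.lift_ι_apply]
      rw [uu_mul, uu_mul, uu_mul, uu_mul, braidD F q m i.1 j.1 h]
  | comm i j h =>
      simp only [σfree, map_mul, FreeAlgebra.lift_ι_apply]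
      rw [uu_mul, uu_mul, commD F q m i.1 j.1 h]
  | quad i =>
      simp only [σfree, map_mul, map_add, map_smul, map_one, FreeAlgebra.lift_ι_apply]
      rw [uu_mul, quadD]
      set e := eD F q m E with he
      have hIe : ID F q m i.1 * e = e := ID_mul_eD F q m E i.1 i.2
      rw [add_mul, smul_mul_assoc, smul_mul_assoc, hIe]
      module

end DYoung
namespace DYoung

variable (F : Type*) [CommRing F] (q : F) (m : ℕ)

/-- The section `H_E → D` as an algebra hom. -/
noncomputable def σH (E : Finset (Fin m)) : HAlg F q m E →ₐ[F] DAlg F q m :=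
  RingQuot.liftAlgHom F ⟨σfree F q m E, σfree_rel F q m E⟩

lemma σH_S (E : Finset (Fin m)) (x : {i : Fin m // i ∈ E}) :
    σH F q m E (SH F q m E x) = SD F q m x.1 * eD F q m E + q • (1 - eD F q m E) := by
  simp [σH, SH, RingQuot.liftAlgHom_mkAlgHom_apply, σfree, FreeAlgebra.lift_ι_apply]

/-- Key identity: `σ_E (π_E x) = x e_E + ε_E(π_E x) (1 - e_E)`. -/
lemma key (E : Finset (Fin m)) (x : DAlg F q m) :
    σH F q m E (piHom F q m E x)
      = x * eD F q m E + (εH F q m E (piHom F q m E x)) • (1 - eD F q m E) := by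
  obtain ⟨a, rfl⟩ := RingQuot.mkAlgHom_surjective F (DRel F q m) x
  induction a using FreeAlgebra.induction with
  | grade0 r =>
      have hr : (RingQuot.mkAlgHom F (DRel F q m)) (algebraMap F (FreeAlgebra F (Fin m ⊕ Fin m)) r)
          = algebraMap F (DAlg F q m) r := AlgHom.commutes _ r
      rw [hr, AlgHom.commutes, AlgHom.commutes, AlgHom.commutes]
      rw [Algebra.algebraMap_eq_smul_one (A := DAlg F q m), smul_mul_assoc, one_mul, smul_sub]
      simp only [Algebra.algebraMap_self_apply]
      module
  | grade1 z =>
      cases z with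
      | inl i =>
          have hS : (RingQuot.mkAlgHom F (DRel F q m)) (ι F (.inl i)) = SD F q m i := rfl
          rw [hS, piHom_S]
          by_cases hi : i ∈ E
          · rw [dif_pos hi, σH_S, εH_S]
          · rw [dif_neg hi, map_zero, map_zero, SD_mul_eD_zero F q m E i hi, zero_smul,
              add_zero]
      | inr i =>
          have hI : (RingQuot.mkAlgHom F (DRel F q m)) (ι F (.inr i)) = ID F q m i := rfl
          rw [hI, piHom_I]
          by_cases hi : i ∈ E
          · rw [if_pos hi, map_one, map_one, one_smul, ID_mul_eD F q m E i hi, add_sub_cancel]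
          · rw [if_neg hi, map_zero, map_zero, ID_mul_eD_zero F q m E i hi, zero_smul, add_zero]
  | mul a b ha hb =>
      rw [map_mul, map_mul, map_mul, ha, hb, uu_mul, map_mul]
  | add a b ha hb =>
      rw [map_add, map_add, map_add, ha, hb, map_add, add_mul, add_smul]
      abel

/-- The map `ψ : D → ∏_E H_E`. -/
noncomputable def ψ0 : DAlg F q m →ₐ[F] ∀ E : Finset (Fin m), HAlg F q m E :=
  Pi.algHom F _ (fun E => piHom F q m E)

lemma ψ0_apply (x : DAlg F q m) (E : Finset (Fin m)) :
    ψ0 F q m x E = piHom F q m E x := rfl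

lemma ψ0_inj : Function.Injective (ψ0 F q m) := by
  have h0 : ∀ x : DAlg F q m, ψ0 F q m x = 0 → x = 0 := by
    intro x hx
    have hE : ∀ E : Finset (Fin m), piHom F q m E x = 0 := by
      intro E
      have := congrFun hx E
      simpa [ψ0_apply] using this
    have hxe : ∀ E : Finset (Fin m), x * eD F q m E = 0 := by
      intro E
      have hk := key F q m E x
      rw [hE E, map_zero, map_zero, zero_smul, add_zero] at hk
      exact hk.symm
    calc x = x * 1 := (mul_one x).symm
      _ = x * ∑ E : Finset (Fin m), eD F q m E := by rw [sum_eD]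
      _ = ∑ E : Finset (Fin m), x * eD F q m E := Finset.mul_sum _ _ _
      _ = 0 := Finset.sum_eq_zero fun E _ => hxe E
  intro a b hab
  have : a - b = 0 := h0 _ (by rw [map_sub, hab, sub_self])
  exact sub_eq_zero.mp this

lemma piHom_lift (T : Finset (Fin m)) (b : FreeAlgebra F {i : Fin m // i ∈ T}) :
    piHom F q m T (FreeAlgebra.lift F (fun x : {i : Fin m // i ∈ T} => SD F q m x.1) b)
      = RingQuot.mkAlgHom F (HRel F q m T) b := by
  have h : (piHom F q m T).comp
      (FreeAlgebra.lift F (fun x : {i : Fin m // i ∈ T} => SD F q m x.1))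
      = RingQuot.mkAlgHom F (HRel F q m T) := by
    apply FreeAlgebra.hom_ext
    funext x
    show piHom F q m T (FreeAlgebra.lift F _ (ι F x)) = _
    rw [FreeAlgebra.lift_ι_apply, piHom_S, dif_pos x.2]
    show SH F q m T ⟨x.1, x.2⟩ = RingQuot.mkAlgHom F (HRel F q m T) (ι F x)
    rfl
  exact DFunLike.congr_fun h b

lemma ψ0_surj : Function.Surjective (ψ0 F q m) := by
  intro f
  choose a ha using fun E => RingQuot.mkAlgHom_surjective F (HRel F q m E) (f E)
  refine ⟨∑ E : Finset (Fin m),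
    (FreeAlgebra.lift F (fun x : {i : Fin m // i ∈ E} => SD F q m x.1) (a E)) * eD F q m E, ?_⟩
  funext T
  rw [ψ0_apply, map_sum]
  have hterm : ∀ E : Finset (Fin m),
      piHom F q m T ((FreeAlgebra.lift F (fun x : {i : Fin m // i ∈ E} => SD F q m x.1) (a E))
        * eD F q m E)
      = if E = T then piHom F q m T
          (FreeAlgebra.lift F (fun x : {i : Fin m // i ∈ E} => SD F q m x.1) (a E)) else 0 := by
    intro E
    rw [map_mul, piHom_eD]
    split_ifs <;> simp
  rw [Finset.sum_congr rfl fun E _ => hterm E, Finset.sum_ite_eq' Finset.univ T, if_pos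
    (Finset.mem_univ T), piHom_lift, ha]

end DYoung

/-- Over `ℂ(q)`, the algebra `D_{n,q}` is isomorphic as a
`ℂ(q)`-algebra to the direct sum `⊕_{c ∈ Comp_n} H_{c,q}` of the Young subalgebras of the
Iwahori–Hecke algebras (compositions `c` of `n` being in bijection with their codes
`E ⊆ {1,…,n-1}`), via the map `ψ` whose `c`-component sends `S i` to `S i` if `i` lies in
the code of `c` and to `0` otherwise, and `I i` to `1` if `i` lies in the code of `c` and
to `0` otherwise. -/
theorem DAlg_iso_direct_sum_of_young_hecke (n : ℕ) :
    ∃ ψ : DAlg (RatFunc ℂ) RatFunc.X (n - 1) ≃ₐ[RatFunc ℂ]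
      (∀ E : Finset (Fin (n - 1)), HAlg (RatFunc ℂ) RatFunc.X (n - 1) E),
      ∀ (i : Fin (n - 1)) (E : Finset (Fin (n - 1))),
        (ψ (RingQuot.mkAlgHom (RatFunc ℂ) (DRel (RatFunc ℂ) RatFunc.X (n - 1))
            (ι (RatFunc ℂ) (.inl i))) E =
          if h : i ∈ E then
            RingQuot.mkAlgHom (RatFunc ℂ) (HRel (RatFunc ℂ) RatFunc.X (n - 1) E)
              (ι (RatFunc ℂ) ⟨i, h⟩)
          else 0) ∧
        (ψ (RingQuot.mkAlgHom (RatFunc ℂ) (DRel (RatFunc ℂ) RatFunc.X (n - 1))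
            (ι (RatFunc ℂ) (.inr i))) E =
          if i ∈ E then 1 else 0) := by
  classical
  set F := RatFunc ℂ
  set q := RatFunc.X (K := ℂ)
  set m := n - 1
  refine ⟨AlgEquiv.ofBijective (DYoung.ψ0 F q m) ⟨DYoung.ψ0_inj F q m, DYoung.ψ0_surj F q m⟩,
    fun i E => ⟨?_, ?_⟩⟩
  · show DYoung.ψ0 F q m (DYoung.SD F q m i) E = _
    rw [DYoung.ψ0_apply, DYoung.piHom_S]
    rfl
  · show DYoung.ψ0 F q m (DYoung.ID F q m i) E = _
    rw [DYoung.ψ0_apply, DYoung.piHom_I]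
end

section
/- Every distinguished minimal-length representative ω of a right coset of the Young subgroup S_{c↑n} (where c↑n appends a final part n−|c|) is a shuffle of a distinguished representative ω_c of a right coset of S_c in S_{|c|} with the increasing word |c|+1, |c|+2, ..., n; moreover if j_{|c|+1} < ... < j_n are the positions of |c|+1,...,n in ω, then a reduced expression of ω is obtained by concatenating a reduced expression of ω_c with the blocks (s_{|c|}s_{|c|−1}···s_{j_{|c|+1}})(s_{|c|+1}···s_{j_{|c|+2}})···(s_{n−1}···s_{j_n}). -/
/-- The simple transposition `s_i = (i, i+1)` of `Fin n` (identity if `i + 1 ≥ n`). -/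
def simpleTransposition (n i : ℕ) : Equiv.Perm (Fin n) :=
  if h : i + 1 < n then Equiv.swap ⟨i, Nat.lt_of_succ_lt h⟩ ⟨i + 1, h⟩ else 1

/-- The Coxeter length (inversion number) of a permutation of `Fin n`. -/
noncomputable def permLength {n : ℕ} (σ : Equiv.Perm (Fin n)) : ℕ :=
  Set.ncard {p : Fin n × Fin n | p.1 < p.2 ∧ σ p.2 < σ p.1}

/-- `l` is a reduced word for `σ ∈ S_n`. -/
def IsReducedWord (n : ℕ) (l : List ℕ) (σ : Equiv.Perm (Fin n)) : Prop :=
  (∀ i ∈ l, i + 1 < n) ∧ (l.map (simpleTransposition n)).prod = σ ∧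
    l.length = permLength σ

/-- The (0-indexed) descent set of a permutation: `{i | σ(i) > σ(i+1)}`; the recoil set
of `ω` is `permDes ω⁻¹`. -/
def permDes {n : ℕ} (σ : Equiv.Perm (Fin n)) : Set ℕ :=
  {i | ∃ h : i + 1 < n, σ ⟨i + 1, h⟩ < σ ⟨i, Nat.lt_of_succ_lt h⟩}

/-- The concatenation of the blocks `(s_{t-1} s_{t-2} ⋯ s_{j_t})` for the values
`t = m, …, n-1` (0-indexed), where `j_t = ω⁻¹(t)` is the position of `t` in the word of
`ω`. -/
def tailWord (n m : ℕ) (ω : Equiv.Perm (Fin n)) : List ℕ :=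
  (List.range' m (n - m)).flatMap fun t =>
    if ht : t < n then
      (List.range' ((ω⁻¹ ⟨t, ht⟩ : ℕ)) (t - (ω⁻¹ ⟨t, ht⟩ : ℕ))).reverse
    else []

theorem Equiv.Perm.apply_inv_self {α : Type*} (f : Equiv.Perm α) (x : α) : f (f⁻¹ x) = x :=
  f.apply_symm_apply x

theorem Equiv.Perm.inv_apply_self {α : Type*} (f : Equiv.Perm α) (x : α) : f⁻¹ (f x) = x :=
  f.symm_apply_apply x

lemma sT_apply {n : ℕ} (i : ℕ) (h : i + 1 < n) (x : Fin n) :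
    ((simpleTransposition n i) x : ℕ) =
      if (x : ℕ) = i then i + 1 else if (x : ℕ) = i + 1 then i else x := by
  simp only [simpleTransposition, dif_pos h, Equiv.swap_apply_def]
  split_ifs with h1 h2 h3 h4 <;> simp_all [Fin.ext_iff] <;> omega

lemma succAbove_val {N : ℕ} (j : Fin (N + 1)) (x : Fin N) :
    ((j.succAbove x : Fin (N + 1)) : ℕ) = if (x : ℕ) < (j : ℕ) then (x : ℕ) else (x : ℕ) + 1 := by
  rcases lt_or_ge (Fin.castSucc x) j with h | h
  · rw [Fin.succAbove_of_castSucc_lt _ _ h]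
    rw [Fin.lt_def] at h
    simp only [Fin.coe_castSucc] at h ⊢
    rw [if_pos h]
  · rw [Fin.succAbove_of_le_castSucc _ _ h]
    rw [Fin.le_def] at h
    simp only [Fin.coe_castSucc, Fin.val_succ] at h ⊢
    rw [if_neg (by omega)]

lemma blockProd_apply {n : ℕ} (a d : ℕ) (hd : a + d < n) (x : Fin n) :
    (((((List.range' a d).reverse).map (simpleTransposition n)).prod) x : ℕ) =
      if (x : ℕ) < a then (x : ℕ)
      else if (x : ℕ) = a then a + d
      else if (x : ℕ) ≤ a + d then (x : ℕ) - 1 else (x : ℕ) := by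
  induction d with
  | zero =>
    simp only [List.range', List.reverse_nil, List.map_nil, List.prod_nil, Equiv.Perm.coe_one,
      id_eq]
    have := x.isLt
    split_ifs <;> omega
  | succ d ih =>
    have hd' : a + d < n := by omega
    rw [List.range'_concat]
    simp only [List.reverse_append, List.reverse_cons, List.reverse_nil, List.nil_append,
      List.cons_append, List.map_cons, List.prod_cons, List.singleton_append, Nat.mul_one,
      one_mul]
    rw [Equiv.Perm.mul_apply]
    have hy := ih hd'
    have hs := sT_apply (a + d) (by omega) ((((List.range' a d).reverse).map
      (simpleTransposition n)).prod x)
    rw [hs]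
    have hx := x.isLt
    split_ifs at hy ⊢ <;> omega

lemma mem_tailWord {n m i : ℕ} {ω : Equiv.Perm (Fin n)} (h : i ∈ tailWord n m ω) :
    i + 1 < n := by
  rw [tailWord, List.mem_flatMap] at h
  obtain ⟨t, ht, hi⟩ := h
  rw [List.mem_range'] at ht
  have htn : t < n := by omega
  rw [dif_pos htn, List.mem_reverse, List.mem_range'] at hi
  have := (ω⁻¹ ⟨t, htn⟩).isLt
  omega

/-- The equivalence between `Fin N` and values `< N` in `Fin (N+1)`. -/
def embEquiv (N : ℕ) : Fin N ≃ {x : Fin (N + 1) // (x : ℕ) < N} where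
  toFun x := ⟨⟨(x : ℕ), by omega⟩, x.isLt⟩
  invFun y := ⟨(y.1 : ℕ), y.2⟩
  left_inv x := rfl
  right_inv y := rfl

lemma sT_extend {N : ℕ} {i : ℕ} (h : i + 1 < N) :
    simpleTransposition (N + 1) i =
      (simpleTransposition N i).extendDomain (embEquiv N) := by
  ext x
  by_cases hx : (x : ℕ) < N
  · rw [Equiv.Perm.extendDomain_apply_subtype (simpleTransposition N i) (embEquiv N) (b := x) hx]
    have h1 := sT_apply i (by omega) x
    have h2 := sT_apply i h ((embEquiv N).symm ⟨x, hx⟩)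
    have hsym : (((embEquiv N).symm ⟨x, hx⟩ : Fin N) : ℕ) = (x : ℕ) := rfl
    have hval : ∀ y : Fin N, (((embEquiv N) y : {z : Fin (N+1) // (z:ℕ) < N}) : Fin (N+1)) =
        ⟨(y : ℕ), by omega⟩ := fun y => rfl
    rw [hval]
    rw [hsym] at h2
    simp only [Fin.ext_iff] at *
    omega
  · rw [Equiv.Perm.extendDomain_apply_not_subtype (simpleTransposition N i) (embEquiv N) (b := x) hx]
    have h1 := sT_apply i (by omega) x
    have := x.isLt
    split_ifs at h1 <;> omega

lemma prod_extend {N : ℕ} (l : List ℕ) (hl : ∀ i ∈ l, i + 1 < N) :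
    ((l.map (simpleTransposition (N + 1))).prod) =
      ((l.map (simpleTransposition N)).prod).extendDomain (embEquiv N) := by
  induction l with
  | nil => simp [Equiv.Perm.extendDomain_one]
  | cons a l ih =>
    simp only [List.map_cons, List.prod_cons]
    rw [ih (fun i hi => hl i (List.mem_cons_of_mem _ hi)),
      sT_extend (hl a (List.mem_cons_self (a := a) (l := l))), ← Equiv.Perm.extendDomain_mul]

/-- Remove the top value from a permutation of `Fin (N+1)`. -/
noncomputable def remTop {N : ℕ} (ω : Equiv.Perm (Fin (N + 1))) : Equiv.Perm (Fin N) :=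
  Equiv.ofBijective
    (fun x => ⟨(ω ((ω⁻¹ (Fin.last N)).succAbove x) : ℕ), by
      have h1 : (ω⁻¹ (Fin.last N)).succAbove x ≠ ω⁻¹ (Fin.last N) := Fin.succAbove_ne _ _
      have h2 : ω ((ω⁻¹ (Fin.last N)).succAbove x) ≠ Fin.last N := fun h =>
        h1 (ω.injective (h.trans (ω.apply_inv_self (Fin.last N)).symm))
      have h3 := (ω ((ω⁻¹ (Fin.last N)).succAbove x)).isLt
      exact lt_of_le_of_ne (Nat.lt_succ_iff.mp h3) fun h => h2 (Fin.ext h)⟩)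
    (Finite.injective_iff_bijective.mp fun x y hxy => by
      have := Fin.ext_iff.mp hxy
      exact Fin.succAbove_right_injective (ω.injective (Fin.ext this)))

lemma remTop_val {N : ℕ} (ω : Equiv.Perm (Fin (N + 1))) (x : Fin N) :
    ((remTop ω) x : ℕ) = (ω ((ω⁻¹ (Fin.last N)).succAbove x) : ℕ) := rfl

lemma remTop_inv {N : ℕ} (ω : Equiv.Perm (Fin (N + 1))) (t : ℕ) (ht : t < N) :
    (ω⁻¹ (Fin.last N)).succAbove ((remTop ω)⁻¹ ⟨t, ht⟩) = ω⁻¹ ⟨t, by omega⟩ := by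
  set x := (remTop ω)⁻¹ ⟨t, ht⟩ with hx
  have h1 : remTop ω x = ⟨t, ht⟩ := Equiv.Perm.apply_inv_self _ _
  have h2 : (ω ((ω⁻¹ (Fin.last N)).succAbove x) : ℕ) = t := by
    rw [← remTop_val, h1]
  have h3 : ω ((ω⁻¹ (Fin.last N)).succAbove x) = ⟨t, by omega⟩ := Fin.ext h2
  rw [← h3, Equiv.Perm.inv_apply_self]

lemma permLength_remTop {N : ℕ} (ω : Equiv.Perm (Fin (N + 1))) :
    permLength ω = permLength (remTop ω) + (N - (ω⁻¹ (Fin.last N) : ℕ)) := by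
  set j := ω⁻¹ (Fin.last N) with hj
  have hωj : ω j = Fin.last N := ω.apply_inv_self _
  have hfne : ∀ x : Fin N, j.succAbove x ≠ j := fun x => Fin.succAbove_ne _ _
  have hS : {p : Fin (N + 1) × Fin (N + 1) | p.1 < p.2 ∧ ω p.2 < ω p.1} =
      ((fun q => (j, q)) '' {q : Fin (N + 1) | j < q}) ∪
      ((Prod.map j.succAbove j.succAbove) ''
        {p : Fin N × Fin N | p.1 < p.2 ∧ (remTop ω) p.2 < (remTop ω) p.1}) := by
    ext p
    constructor
    · rintro ⟨hlt, hinv⟩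
      by_cases h1 : p.1 = j
      · exact Or.inl ⟨p.2, h1 ▸ hlt, by rw [← h1]⟩
      · refine Or.inr ?_
        have h2 : p.2 ≠ j := by
          intro h
          rw [h, hωj] at hinv
          exact absurd hinv (not_lt.mpr (Fin.le_last _))
        obtain ⟨x, hx⟩ := Fin.exists_succAbove_eq h1
        obtain ⟨y, hy⟩ := Fin.exists_succAbove_eq h2
        refine ⟨(x, y), ⟨?_, ?_⟩, by simp [Prod.map, hx, hy]⟩
        · have := hlt; rw [← hx, ← hy] at this
          exact (Fin.strictMono_succAbove j).lt_iff_lt.mp this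
        · rw [Fin.lt_def, remTop_val, remTop_val, ← hj, hx, hy]
          exact hinv
    · rintro (⟨q, hq, rfl⟩ | ⟨⟨x, y⟩, ⟨hxy, hinv⟩, rfl⟩)
      · refine ⟨hq, ?_⟩
        show ω q < ω j
        rw [hωj]
        have hne : ω q ≠ Fin.last N := fun h => (ne_of_gt hq) (ω.injective (h.trans hωj.symm))
        have h4 := (ω q).isLt
        have h5 : (ω q : ℕ) ≠ N := fun h => hne (Fin.ext (by rw [h, Fin.val_last]))
        rw [Fin.lt_def, Fin.val_last]
        omega
      · refine ⟨(Fin.strictMono_succAbove j) hxy, ?_⟩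
        rw [Fin.lt_def, remTop_val, remTop_val, ← hj] at hinv
        exact hinv
  have hdisj : Disjoint ((fun q => (j, q)) '' {q : Fin (N + 1) | j < q})
      ((Prod.map j.succAbove j.succAbove) ''
        {p : Fin N × Fin N | p.1 < p.2 ∧ (remTop ω) p.2 < (remTop ω) p.1}) := by
    rw [Set.disjoint_left]
    rintro p ⟨q, _, rfl⟩ ⟨⟨x, y⟩, _, hp⟩
    have hfst : j.succAbove x = j := congrArg Prod.fst hp
    exact hfne x hfst
  rw [permLength, hS, Set.ncard_union_eq hdisj (Set.toFinite _) (Set.toFinite _)]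
  have hc1 : ((fun q => (j, q)) '' {q : Fin (N + 1) | j < q}).ncard = N - (j : ℕ) := by
    rw [Set.ncard_image_of_injective _ (fun a b h => (Prod.mk.injEq _ _ _ _).mp h |>.2)]
    have : {q : Fin (N + 1) | j < q} = ↑(Finset.Ioi j) := by
      ext q; simp
    rw [this, Set.ncard_coe_finset, Fin.card_Ioi]
    omega
  have hc2 : ((Prod.map j.succAbove j.succAbove) ''
      {p : Fin N × Fin N | p.1 < p.2 ∧ (remTop ω) p.2 < (remTop ω) p.1}).ncard =
      permLength (remTop ω) := by
    rw [Set.ncard_image_of_injective _ (fun p q h => Prod.ext_iff.mpr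
      ⟨Fin.succAbove_right_injective (congrArg Prod.fst h),
       Fin.succAbove_right_injective (congrArg Prod.snd h)⟩)]
    rfl
  rw [hc1, hc2]
  omega

lemma aux_shuffle (m : ℕ) (D : Set ℕ) (hD : ∀ i ∈ D, i + 1 < m) :
    ∀ (k : ℕ) (ω : Equiv.Perm (Fin (m + k)))
      (_ : permDes ω⁻¹ ⊆ D ∪ {i | i + 1 = m}),
    ∃ pos : Fin m → Fin (m + k), StrictMono pos ∧
      (∀ p : Fin (m + k), (ω p : ℕ) < m ↔ p ∈ Set.range pos) ∧
      ∃ ωc : Equiv.Perm (Fin m),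
        (∀ i : Fin m, (ωc i : ℕ) = (ω (pos i) : ℕ)) ∧
        permDes ωc⁻¹ ⊆ D ∧
        (∀ p q : Fin (m + k), p < q → m ≤ (ω p : ℕ) → m ≤ (ω q : ℕ) → ω p < ω q) ∧
        (∀ lc : List ℕ, IsReducedWord m lc ωc →
          IsReducedWord (m + k) (lc ++ tailWord (m + k) m ω) ω) := by
  intro k
  induction k with
  | zero =>
    intro ω hω
    refine ⟨fun i => i, fun a b h => h, fun p => ⟨fun _ => ⟨p, rfl⟩, fun _ => (ω p).isLt⟩, ω,
      fun i => rfl, ?_, ?_, ?_⟩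
    · intro i hi
      obtain ⟨h1, -⟩ := id hi
      rcases hω hi with hd | hm
      · exact hd
      · have : i + 1 = m := hm
        omega
    · intro p q _ hp _
      have := (ω p).isLt
      omega
    · intro lc hlc
      have ht : tailWord (m + 0) m ω = [] := by simp [tailWord]
      rw [ht, List.append_nil]
      exact hlc
  | succ k ih =>
    intro ω hω
    set j : Fin (m + k + 1) := ω⁻¹ (Fin.last (m + k)) with hjdef
    have hjval : ω j = Fin.last (m + k) := ω.apply_inv_self _
    have hjle : (j : ℕ) ≤ m + k := Nat.lt_succ_iff.mp j.isLt
    have hNoRec : ∀ (i : ℕ) (h : i + 1 < m + (k + 1)), m ≤ i →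
        (ω⁻¹ ⟨i, Nat.lt_of_succ_lt h⟩ : ℕ) < (ω⁻¹ ⟨i + 1, h⟩ : ℕ) := by
      intro i h hmi
      by_contra hcon
      have hne : (ω⁻¹ ⟨i + 1, h⟩ : ℕ) ≠ (ω⁻¹ ⟨i, Nat.lt_of_succ_lt h⟩ : ℕ) := by
        intro he
        have h2 := ω⁻¹.injective (Fin.ext he)
        have h3 : i + 1 = i := Fin.ext_iff.mp h2
        omega
      have hmem : i ∈ permDes ω⁻¹ := ⟨h, Fin.lt_def.mpr (by omega)⟩
      rcases hω hmem with hd | hm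
      · exact absurd (hD i hd) (by omega)
      · have : i + 1 = m := hm
        omega
    have hMono : ∀ (a b : ℕ) (ha : a < m + (k + 1)), m ≤ a → a < b →
        ∀ hb : b < m + (k + 1), (ω⁻¹ ⟨a, ha⟩ : ℕ) < (ω⁻¹ ⟨b, hb⟩ : ℕ) := by
      intro a b ha hma hab
      induction b, hab using Nat.le_induction with
      | base => intro hb; exact hNoRec a hb hma
      | succ b hab ihb =>
        intro hb1
        exact lt_trans (ihb (by omega)) (hNoRec b hb1 (by omega))
    have hjtop : ∀ (t : ℕ) (ht : t < m + k), m ≤ t →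
        (ω⁻¹ ⟨t, Nat.lt_succ_of_lt ht⟩ : ℕ) < (j : ℕ) := by
      intro t ht hmt
      exact hMono t (m + k) (Nat.lt_succ_of_lt ht) hmt ht (by omega)
    set ω' : Equiv.Perm (Fin (m + k)) := remTop ω with hω'def
    have hω'val : ∀ x : Fin (m + k), (ω' x : ℕ) = (ω (j.succAbove x) : ℕ) := fun x => rfl
    have hω'inv : ∀ (t : ℕ) (ht : t < m + k),
        j.succAbove (ω'⁻¹ ⟨t, ht⟩) = ω⁻¹ ⟨t, by omega⟩ := fun t ht => remTop_inv ω t ht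
    have hω'invval : ∀ (t : ℕ) (ht : t < m + k), m ≤ t →
        ((ω'⁻¹ ⟨t, ht⟩ : Fin (m + k)) : ℕ) = (ω⁻¹ ⟨t, by omega⟩ : ℕ) := by
      intro t ht hmt
      have h1 := hω'inv t ht
      have h2 := succAbove_val j (ω'⁻¹ ⟨t, ht⟩)
      rw [h1] at h2
      have h3 := hjtop t ht hmt
      split_ifs at h2 with h4 <;> [omega; omega]
    have hω'rec : permDes ω'⁻¹ ⊆ D ∪ {i | i + 1 = m} := by
      intro i hi
      obtain ⟨h, hlt⟩ := hi
      have h2 : (ω'⁻¹ ⟨i + 1, h⟩ : ℕ) < (ω'⁻¹ ⟨i, by omega⟩ : ℕ) := Fin.lt_def.mp hlt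
      have h3 : ((j.succAbove (ω'⁻¹ ⟨i + 1, h⟩)) : ℕ) <
          (j.succAbove (ω'⁻¹ ⟨i, by omega⟩) : ℕ) :=
        Fin.lt_def.mp ((Fin.strictMono_succAbove j) (Fin.lt_def.mpr h2))
      rw [hω'inv (i + 1) h, hω'inv i (by omega)] at h3
      exact hω ⟨by omega, Fin.lt_def.mpr h3⟩
    obtain ⟨pos', hmono', hrange', ωc, hval', hdes', hinc', hred'⟩ := ih ω' hω'rec
    refine ⟨fun i => j.succAbove (pos' i),
      fun a b hab => (Fin.strictMono_succAbove j) (hmono' hab), ?_, ωc, ?_, hdes', ?_, ?_⟩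
    · intro p
      by_cases hp : p = j
      · constructor
        · intro hlt
          have h1 : (ω p : ℕ) = m + k := by rw [hp, hjval, Fin.val_last]
          omega
        · rintro ⟨i, hi⟩
          have hi' : j.succAbove (pos' i) = p := hi
          rw [hp] at hi'
          exact absurd hi' (Fin.succAbove_ne j (pos' i))
      · obtain ⟨x, hx⟩ := Fin.exists_succAbove_eq hp
        constructor
        · intro hlt
          have h1 : (ω' x : ℕ) < m := by rw [hω'val, hx]; exact hlt
          obtain ⟨i, hi⟩ := (hrange' x).mp h1
          exact ⟨i, show j.succAbove (pos' i) = p by rw [hi, hx]⟩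
        · rintro ⟨i, hi⟩
          have hi' : j.succAbove (pos' i) = p := hi
          have hx' : x = pos' i :=
            Fin.succAbove_right_injective (by rw [hx, hi'])
          have h1 : (ω' x : ℕ) < m := (hrange' x).mpr ⟨i, hx'.symm⟩
          rw [hω'val, hx] at h1
          exact h1
    · intro i
      rw [hval' i, hω'val]
    · intro p q hpq hp hq
      by_cases hq' : q = j
      · have h1 : ω p ≠ Fin.last (m + k) := fun h =>
          (ne_of_lt hpq) ((ω.injective (h.trans hjval.symm)).trans hq'.symm)
        have h2 := (ω p).isLt
        have h3 : (ω p : ℕ) ≠ m + k := fun h => h1 (Fin.ext (by rw [h, Fin.val_last]))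
        rw [hq', hjval]
        exact Fin.lt_def.mpr (by rw [Fin.val_last]; omega)
      · by_cases hp' : p = j
        · exfalso
          have h1 : ω q ≠ Fin.last (m + k) := fun h => hq' (ω.injective (h.trans hjval.symm))
          have h2 := (ω q).isLt
          have h3 : (ω q : ℕ) ≠ m + k := fun h => h1 (Fin.ext (by rw [h, Fin.val_last]))
          have h4 : (ω q : ℕ) < m + k := by omega
          have h5 := hjtop (ω q : ℕ) h4 hq
          have h6 : ω⁻¹ ⟨(ω q : ℕ), by omega⟩ = q := by
            rw [Fin.eta]; exact ω.inv_apply_self q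
          rw [h6] at h5
          have h7 := Fin.lt_def.mp hpq
          rw [hp'] at h7
          omega
        · obtain ⟨x, hx⟩ := Fin.exists_succAbove_eq hp'
          obtain ⟨y, hy⟩ := Fin.exists_succAbove_eq hq'
          have hxy : x < y := (Fin.strictMono_succAbove j).lt_iff_lt.mp
            (by rw [hx, hy]; exact hpq)
          have h1 := hinc' x y hxy (by rw [hω'val, hx]; exact hp)
            (by rw [hω'val, hy]; exact hq)
          have h2 := hω'val x
          have h3 := hω'val y
          rw [hx] at h2
          rw [hy] at h3
          have h4 := Fin.lt_def.mp h1
          exact Fin.lt_def.mpr (by omega)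
    · intro lc hlc
      have hred := hred' lc hlc
      obtain ⟨hb', hp', hl'⟩ := hred
      have htw : tailWord (m + (k + 1)) m ω =
          tailWord (m + k) m ω' ++ (List.range' (j : ℕ) ((m + k) - (j : ℕ))).reverse := by
        rw [tailWord, tailWord]
        have h1 : m + (k + 1) - m = k + 1 := by omega
        have h2 : m + k - m = k := by omega
        rw [h1, h2, List.range'_concat, List.flatMap_append]
        congr 1
        · rw [List.flatMap_def, List.flatMap_def]
          congr 1
          apply List.map_congr_left
          intro t ht
          rw [List.mem_range'] at ht
          have ht1 : t < m + k := by omega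
          have ht2 : t < m + (k + 1) := by omega
          rw [dif_pos ht2, dif_pos ht1, hω'invval t ht1 (by omega)]
        · simp only [one_mul]
          rw [List.flatMap_singleton, dif_pos (show m + k < m + (k + 1) by omega)]
          have hjj : (ω⁻¹ ⟨m + k, by omega⟩ : ℕ) = (j : ℕ) := rfl
          rw [hjj]
      refine ⟨?_, ?_, ?_⟩
      · intro i hi
        rcases List.mem_append.mp hi with h | h
        · exact Nat.lt_of_lt_of_le (hlc.1 i h) (by omega)
        · exact mem_tailWord h
      · -- the product
        rw [htw, ← List.append_assoc, List.map_append, List.prod_append]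
        have hgoal : (((lc ++ tailWord (m + k) m ω').map
              (simpleTransposition (m + k + 1))).prod) *
            (((List.range' (j : ℕ) ((m + k) - (j : ℕ))).reverse).map
              (simpleTransposition (m + k + 1))).prod = ω := by
          rw [prod_extend _ hb', hp']
          apply Equiv.ext
          intro x
          rw [Equiv.Perm.mul_apply]
          have hB := blockProd_apply (n := m + k + 1) (j : ℕ) ((m + k) - (j : ℕ))
            (by omega) x
          have hxle := Nat.lt_succ_iff.mp x.isLt
          rcases lt_trichotomy (x : ℕ) (j : ℕ) with hc | hc | hc
          · have hBx : (((List.range' (j : ℕ) ((m + k) - (j : ℕ))).reverse).map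
                (simpleTransposition (m + k + 1))).prod x = x :=
              Fin.ext (by rw [hB, if_pos hc])
            have hx1 : (x : ℕ) < m + k := by omega
            rw [hBx, Equiv.Perm.extendDomain_apply_subtype ω' (embEquiv (m + k))
              (b := x) hx1, Fin.ext_iff]
            show (ω' ⟨(x : ℕ), hx1⟩ : ℕ) = (ω x : ℕ)
            rw [hω'val]
            have hsx : j.succAbove ⟨(x : ℕ), hx1⟩ = x := Fin.ext (by
              rw [succAbove_val]
              show (if (x : ℕ) < (j : ℕ) then (x : ℕ) else (x : ℕ) + 1) = (x : ℕ)
              rw [if_pos hc])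
            rw [hsx]
          · have hxj : x = j := Fin.ext hc
            have hBx : (((List.range' (j : ℕ) ((m + k) - (j : ℕ))).reverse).map
                (simpleTransposition (m + k + 1))).prod x = Fin.last (m + k) :=
              Fin.ext (by
                rw [hB, if_neg (by omega), if_pos hc, Fin.val_last]
                omega)
            rw [hBx, Equiv.Perm.extendDomain_apply_not_subtype ω' (embEquiv (m + k))
              (b := Fin.last (m + k)) (by rw [Fin.val_last]; omega)]
            rw [hxj]
            exact hjval.symm
          · have hx2 : (x : ℕ) - 1 < m + k := by omega
            have hBx : (((List.range' (j : ℕ) ((m + k) - (j : ℕ))).reverse).map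
                (simpleTransposition (m + k + 1))).prod x = ⟨(x : ℕ) - 1, by omega⟩ :=
              Fin.ext (by rw [hB, if_neg (by omega), if_neg (by omega), if_pos (by omega)])
            rw [hBx, Equiv.Perm.extendDomain_apply_subtype ω' (embEquiv (m + k))
              (b := ⟨(x : ℕ) - 1, by omega⟩) hx2, Fin.ext_iff]
            show (ω' ⟨(x : ℕ) - 1, hx2⟩ : ℕ) = (ω x : ℕ)
            rw [hω'val]
            have hsx : j.succAbove ⟨(x : ℕ) - 1, hx2⟩ = x := Fin.ext (by
              rw [succAbove_val]
              show (if (x : ℕ) - 1 < (j : ℕ) then (x : ℕ) - 1 else ((x : ℕ) - 1) + 1) = (x : ℕ)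
              rw [if_neg (by omega)]
              omega)
            rw [hsx]
        exact hgoal
      · -- the length
        rw [htw, ← List.append_assoc, List.length_append, hl', List.length_reverse,
          List.length_range']
        rw [show permLength ω = permLength ω' + ((m + k) - (j : ℕ)) from permLength_remTop ω]

/-- Let `c` be a composition of `m ≤ n`, encoded by its (0-indexed)
cut set `D ⊆ {0,…,m-2}`, and `c↑n` the composition of `n` obtained by appending the part
`n - m`, whose cut set is `D ∪ {m-1}`.  Every distinguished minimal-length representative
`ω` of a right coset of the Young subgroup `S_{c↑n}` — i.e. every `ω` with recoil set
contained in the cut set of `c↑n` — is a shuffle of a distinguished representative `ω_c`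
of a right coset of `S_c` in `S_m` with the increasing word `m+1, …, n`: the values `< m`
of `ω` sit at positions `pos 0 < pos 1 < ⋯` and form the word of `ω_c` (which has recoils
in `D`), while the values `≥ m` appear in increasing order.  Moreover, if
`j_{m} ,…, j_{n-1}` are the positions of the values `m, …, n-1` (0-indexed) in `ω`, then
a reduced expression of `ω` is obtained by concatenating any reduced expression of `ω_c`
with the blocks `(s_{m-1} ⋯ s_{j_m})(s_m ⋯ s_{j_{m+1}}) ⋯ (s_{n-2} ⋯ s_{j_{n-1}})`. -/
theorem distinguished_rep_shuffle (n m : ℕ) (hmn : m ≤ n) (D : Set ℕ)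
    (hD : ∀ i ∈ D, i + 1 < m) (ω : Equiv.Perm (Fin n))
    (hω : permDes ω⁻¹ ⊆ D ∪ {i | i + 1 = m}) :
    ∃ pos : Fin m → Fin n, StrictMono pos ∧
      (∀ p : Fin n, (ω p : ℕ) < m ↔ p ∈ Set.range pos) ∧
      ∃ ωc : Equiv.Perm (Fin m),
        (∀ i : Fin m, (ωc i : ℕ) = (ω (pos i) : ℕ)) ∧
        permDes ωc⁻¹ ⊆ D ∧
        (∀ p q : Fin n, p < q → m ≤ (ω p : ℕ) → m ≤ (ω q : ℕ) → ω p < ω q) ∧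
        (∀ lc : List ℕ, IsReducedWord m lc ωc →
          IsReducedWord n (lc ++ tailWord n m ω) ω) := by
  obtain ⟨k, rfl⟩ : ∃ k, n = m + k := ⟨n - m, by omega⟩
  exact aux_shuffle m D hD k ω hω
end
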